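/- Let G be a nondegenerate symmetric n × n integer matrix with all diagonal entries even (the Gram matrix of an even lattice), and suppose the finite abelian group ℤⁿ / G·ℤⁿ is 2-elementary, isomorphic to (ℤ/2ℤ)ᵃ. Then n ≡ a (mod 2). -/

import Mathlib

open Module LinearMap

/-- A nondegenerate alternating bilinear form exists only in even dimension. -/
lemma even_finrank_of_isAlt_nondeg {K : Type} [Field K] :
    ∀ (m : ℕ) (V : Type) [AddCommGroup V] [Module K V] [FiniteDimensional K V],
      finrank K V = m → ∀ B : LinearMap.BilinForm K V, B.IsAlt → B.Nondegenerate → Even m := by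
  intro m
  induction m using Nat.strong_induction_on with
  | _ m ih =>
    intro V _ _ _ hm B halt hnd
    rcases Nat.eq_zero_or_pos m with h0 | hpos
    · simp [h0]
    have hnt : Nontrivial V := by
      rw [← Module.finrank_pos_iff (R := K), hm]
      exact hpos
    obtain ⟨x, hx⟩ := exists_ne (0 : V)
    have hy : ∃ y, B x y ≠ 0 := by
      by_contra h
      push_neg at h
      exact hx (hnd.1 x h)
    obtain ⟨y, hy⟩ := hy
    have hyne : y ≠ 0 := by rintro rfl; simp at hy
    set W : Submodule K V := Submodule.span K {x, y} with hW
    have hxW : x ∈ W := Submodule.subset_span (by simp)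
    have hyW : y ∈ W := Submodule.subset_span (by simp)
    -- restriction to W is nondegenerate
    have hres : (B.restrict W).Nondegenerate := by
      refine (LinearMap.IsRefl.nondegenerate_iff_separatingLeft (show (B.restrict W).IsAlt from fun w => halt w).isRefl).mpr ?_
      intro w hw
      obtain ⟨s, t, hst⟩ := Submodule.mem_span_pair.mp w.2
      have h1 := hw ⟨x, hxW⟩
      have h2 := hw ⟨y, hyW⟩
      simp only [LinearMap.BilinForm.restrict_apply, LinearMap.domRestrict_apply] at h1 h2
      rw [← hst] at h1 h2
      simp only [map_add, map_smul, LinearMap.add_apply, LinearMap.smul_apply,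
        smul_eq_mul] at h1 h2
      rw [halt.self_eq_zero x, ← halt.neg_eq] at h1
      rw [halt.self_eq_zero y] at h2
      have ht : t = 0 := by
        have : t * -B x y = 0 := by simpa using h1
        rcases mul_eq_zero.mp this with h | h
        · exact h
        · exact absurd (neg_eq_zero.mp h) hy
      have hs : s = 0 := by
        have : s * B x y = 0 := by simpa using h2
        rcases mul_eq_zero.mp this with h | h
        · exact h
        · exact absurd h hy
      have : (w : V) = 0 := by rw [← hst, ht, hs]; simp
      exact Subtype.ext this
    have hrefl : B.IsRefl := halt.isRefl
    have hcompl : IsCompl W (B.orthogonal W) :=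
      LinearMap.BilinForm.isCompl_orthogonal_of_restrict_nondegenerate hrefl hres
    -- finrank W = 2
    have hli : LinearIndependent K ![x, y] := by
      rw [LinearIndependent.pair_iff]
      intro s t hst
      have h2 : B (s • x + t • y) y = 0 := by rw [hst]; simp
      simp only [map_add, map_smul, LinearMap.add_apply, LinearMap.smul_apply,
        smul_eq_mul, halt.self_eq_zero y] at h2
      have hs : s = 0 := by
        have : s * B x y = 0 := by simpa using h2
        rcases mul_eq_zero.mp this with h | h
        · exact h
        · exact absurd h hy
      subst hs
      simp only [zero_smul, zero_add] at hst
      rcases smul_eq_zero.mp hst with h | h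
      · exact ⟨rfl, h⟩
      · exact absurd h hyne
    have hfW : finrank K W = 2 := by
      have h2 := finrank_span_eq_card hli
      have hrange : Set.range ![x, y] = {x, y} := by
        simp [Matrix.range_cons, Matrix.range_empty, Set.union_singleton, Set.pair_comm]
      rw [hrange] at h2
      rw [hW, h2]
      simp
    -- orthogonal complement
    have hfO : finrank K (B.orthogonal W) = m - 2 := by
      rw [LinearMap.BilinForm.finrank_orthogonal hnd, hm, hfW]
    have hle : 2 ≤ m := by
      rw [← hfW, ← hm]; exact Submodule.finrank_le W
    have hresO : (B.restrict (B.orthogonal W)).Nondegenerate := by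
      rw [LinearMap.BilinForm.restrict_nondegenerate_iff_isCompl_orthogonal hrefl,
        LinearMap.BilinForm.orthogonal_orthogonal hnd hrefl]
      exact hcompl.symm
    have haltO : (B.restrict (B.orthogonal W)).IsAlt := fun w => halt w
    have := ih (m - 2) (by omega) (B.orthogonal W) hfO _ haltO hresO
    obtain ⟨k, hk⟩ := this
    exact ⟨k + 1, by omega⟩

/-- If `G` is a nondegenerate symmetric integer matrix with even diagonal
(the Gram matrix of an even lattice) whose cokernel `ℤⁿ / G·ℤⁿ` is
2-elementary, isomorphic to `(ℤ/2ℤ)ᵃ`, then `n ≡ a (mod 2)`. -/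
theorem even_lattice_two_elementary_rank_parity {n a : ℕ}
    (G : Matrix (Fin n) (Fin n) ℤ) (hsymm : G.IsSymm)
    (hdet : G.det ≠ 0) (heven : ∀ i, Even (G i i))
    (e : ((Fin n → ℤ) ⧸ LinearMap.range G.mulVecLin) ≃+ (Fin a → ZMod 2)) :
    n % 2 = a % 2 := by
  classical
  set K := ZMod 2 with hK
  set Gb : Matrix (Fin n) (Fin n) K := G.map (Int.cast) with hGb
  -- the reduction map mod 2
  let r : (Fin n → ℤ) →ₗ[ℤ] (Fin n → K) :=
    { toFun := fun x i => ((x i : ℤ) : K)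
      map_add' := by intro x y; funext i; simp only [Pi.add_apply]; push_cast; ring
      map_smul' := by
        intro c x; funext i
        simp only [Pi.smul_apply, RingHom.id_apply, smul_eq_mul, zsmul_eq_mul, Int.cast_mul]
        exact (Int.cast_mul c (x i)).trans (zsmul_eq_mul _ _).symm }
  have hrsurj : Function.Surjective r := by
    intro y
    refine ⟨fun i => ((y i).val : ℤ), ?_⟩
    funext i
    show ((((y i).val : ℤ)) : K) = y i
    push_cast
    simp only [ZMod.natCast_val]
    exact ZMod.cast_id _ _
  have hcomm : ∀ v : Fin n → ℤ, r (G.mulVec v) = Gb.mulVec (r v) := by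
    intro v
    funext i
    show (((G.mulVec v) i : ℤ) : K) = _
    simp only [Matrix.mulVec, dotProduct, hGb, Matrix.map_apply, Int.cast_sum,
      Int.cast_mul]
    exact (Int.cast_sum _ _).trans (Finset.sum_congr rfl fun j _ => Int.cast_mul _ _)
  -- the cokernel is 2-torsion
  have h2tor : ∀ x : Fin n → ℤ, (2 : ℤ) • x ∈ LinearMap.range G.mulVecLin := by
    intro x
    have hq : (2 : ℤ) • (Submodule.Quotient.mk x :
        (Fin n → ℤ) ⧸ LinearMap.range G.mulVecLin) = 0 := by
      apply e.injective
      rw [map_zsmul, map_zero]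
      funext i
      show (2 : ℤ) • (e (Submodule.Quotient.mk x)) i = 0
      rw [two_zsmul]
      exact CharTwo.add_self_eq_zero _
    rwa [← Submodule.Quotient.mk_smul, Submodule.Quotient.mk_eq_zero] at hq
  -- map to the mod-2 cokernel
  let Qm := (Fin n → K) ⧸ LinearMap.range Gb.mulVecLin
  let f : (Fin n → ℤ) →ₗ[ℤ] Qm :=
    (((LinearMap.range Gb.mulVecLin).mkQ).restrictScalars ℤ).comp r
  have hfker : LinearMap.range G.mulVecLin ≤ LinearMap.ker f := by
    rintro x ⟨v, rfl⟩
    show ((LinearMap.range Gb.mulVecLin).mkQ) (r (G.mulVec v)) = 0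
    rw [hcomm, Submodule.mkQ_apply, Submodule.Quotient.mk_eq_zero]
    exact ⟨r v, rfl⟩
  let φ : ((Fin n → ℤ) ⧸ LinearMap.range G.mulVecLin) →ₗ[ℤ] Qm :=
    Submodule.liftQ _ f hfker
  have hφsurj : Function.Surjective φ := by
    intro q
    obtain ⟨y, rfl⟩ := Submodule.Quotient.mk_surjective _ q
    obtain ⟨x, rfl⟩ := hrsurj y
    exact ⟨Submodule.Quotient.mk x, rfl⟩
  have hφinj : Function.Injective φ := by
    rw [injective_iff_map_eq_zero]
    intro q hq
    obtain ⟨x, rfl⟩ := Submodule.Quotient.mk_surjective _ q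
    have hfx : ((LinearMap.range Gb.mulVecLin).mkQ) (r x) = 0 := hq
    rw [Submodule.mkQ_apply, Submodule.Quotient.mk_eq_zero] at hfx
    obtain ⟨w, hw⟩ := hfx
    obtain ⟨v, rfl⟩ := hrsurj w
    rw [Matrix.mulVecLin_apply, ← hcomm] at hw
    have hdvd : ∀ i, (2 : ℤ) ∣ (x - G.mulVec v) i := by
      intro i
      have hcf : (((G.mulVec v) i : ℤ) : K) = ((x i : ℤ) : K) := congrFun hw i
      have : ((x i - (G.mulVec v) i : ℤ) : K) = 0 := by push_cast; rw [hcf]; ring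
      exact (ZMod.intCast_zmod_eq_zero_iff_dvd _ 2).mp this
    have hx : x = G.mulVec v + (2 : ℤ) • (fun i => (x - G.mulVec v) i / 2) := by
      funext i
      have := Int.mul_ediv_cancel' (hdvd i)
      simp only [Pi.add_apply, Pi.smul_apply, smul_eq_mul, Pi.sub_apply] at this ⊢
      omega
    rw [Submodule.Quotient.mk_eq_zero, hx]
    exact Submodule.add_mem _ ⟨v, rfl⟩ (h2tor _)
  let eqv : ((Fin n → ℤ) ⧸ LinearMap.range G.mulVecLin) ≃ₗ[ℤ] Qm :=
    LinearEquiv.ofBijective φ ⟨hφinj, hφsurj⟩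
  let E : Qm ≃+ (Fin a → K) := (eqv.symm.toAddEquiv).trans e
  -- compute the dimension of the cokernel mod 2
  have : Finite Qm := Finite.of_equiv _ E.toEquiv.symm
  have : Fintype Qm := Fintype.ofFinite Qm
  have hcard : Fintype.card Qm = 2 ^ a := by
    rw [Fintype.card_congr E.toEquiv]
    have hcK : Fintype.card K = 2 := ZMod.card 2
    simp [hcK]
  have hfinQ : finrank K Qm = a := by
    have h1 := card_eq_pow_finrank (K := K) (V := Qm)
    rw [ZMod.card, hcard] at h1
    exact (Nat.pow_right_injective (le_refl 2) h1.symm)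
  have hfinV : finrank K (Fin n → K) = n := by simp
  have hfinrange : finrank K (LinearMap.range Gb.mulVecLin) = n - a := by
    have := Submodule.finrank_quotient_add_finrank (LinearMap.range Gb.mulVecLin)
    rw [hfinQ, hfinV] at this
    omega
  have haln : a ≤ n := by
    have := Submodule.finrank_quotient_add_finrank (LinearMap.range Gb.mulVecLin)
    rw [hfinQ, hfinV] at this
    omega
  have hfinker : finrank K (LinearMap.ker Gb.mulVecLin) = a := by
    have := LinearMap.finrank_range_add_finrank_ker Gb.mulVecLin
    rw [hfinrange, hfinV] at this
    omega
  -- pick a complement of the kernel (radical)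
  obtain ⟨C, hC⟩ := Submodule.exists_isCompl (LinearMap.ker Gb.mulVecLin)
  have hfinC : finrank K C = n - a := by
    have := Submodule.finrank_add_eq_of_isCompl hC
    rw [hfinker, hfinV] at this
    omega
  -- the bilinear form
  set B : LinearMap.BilinForm K (Fin n → K) := Matrix.toBilin' Gb with hB
  have hGbsymm : ∀ i j, Gb i j = Gb j i := by
    intro i j
    simp only [hGb, Matrix.map_apply]
    rw [← hsymm.apply i j]
  have hGbdiag : ∀ i, Gb i i = 0 := by
    intro i
    obtain ⟨k, hk⟩ := heven i
    have hkk : ((G i i : ℤ) : K) = ((k : ℤ) : K) + ((k : ℤ) : K) := by rw [hk]; push_cast; ring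
    simp only [hGb, Matrix.map_apply]
    rw [hkk]
    exact CharTwo.add_self_eq_zero _
  have halt : B.IsAlt := by
    intro x
    rw [hB, Matrix.toBilin'_apply]
    rw [← Finset.sum_product']
    apply Finset.sum_involution (fun p _ => (p.2, p.1))
    · intro p _
      have : x p.2 * Gb p.2 p.1 * x p.1 = x p.1 * Gb p.1 p.2 * x p.2 := by
        rw [hGbsymm p.2 p.1]; ring
      rw [this]
      exact CharTwo.add_self_eq_zero _
    · intro p _ hfp
      intro hcontra
      apply hfp
      have h12 : p.2 = p.1 := congrArg Prod.fst hcontra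
      rw [h12, hGbdiag]
      ring
    · intro p _; exact Finset.mem_univ _
    · intro p _; rfl
  -- B vanishes against the kernel
  have hBker : ∀ (c : Fin n → K) (k : Fin n → K), k ∈ LinearMap.ker Gb.mulVecLin →
      B c k = 0 := by
    intro c k hk
    rw [hB, Matrix.toBilin'_apply']
    rw [LinearMap.mem_ker] at hk
    have : Gb.mulVec k = 0 := hk
    rw [this]
    simp [dotProduct]
  -- restriction of B to the complement is nondegenerate
  have hresC : (B.restrict C).Nondegenerate := by
    refine (LinearMap.IsRefl.nondegenerate_iff_separatingLeft (show (B.restrict C).IsAlt from fun w => halt w).isRefl).mpr ?_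
    intro c hc
    have hBall : ∀ y : Fin n → K, B (c : Fin n → K) y = 0 := by
      intro y
      obtain ⟨y1, y2, hy1, hy2, rfl⟩ :=
        Submodule.codisjoint_iff_exists_add_eq.mp hC.codisjoint y
      rw [map_add]
      rw [hBker _ y1 hy1]
      have := hc ⟨y2, hy2⟩
      simp only [LinearMap.BilinForm.restrict_apply, LinearMap.domRestrict_apply] at this
      rw [this]
      ring
    have hcker : (c : Fin n → K) ∈ LinearMap.ker Gb.mulVecLin := by
      rw [LinearMap.mem_ker]
      funext j
      have := hBall (Pi.single j 1)
      rw [hB, Matrix.toBilin'_apply'] at this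
      rw [Matrix.mulVec_single] at this
      show (Gb.mulVec (c : Fin n → K)) j = 0
      rw [← this]
      simp [Matrix.mulVec, dotProduct]
      exact Finset.sum_congr rfl fun i _ => by rw [hGbsymm j i]; ring
    have : (c : Fin n → K) ∈ (LinearMap.ker Gb.mulVecLin) ⊓ C :=
      ⟨hcker, c.2⟩
    rw [hC.inf_eq_bot] at this
    exact Subtype.ext this
  have haltC : (B.restrict C).IsAlt := fun w => halt w
  have heven2 : Even (n - a) := by
    have := even_finrank_of_isAlt_nondeg (n - a) C (by rw [hfinC]) (B.restrict C) haltC hresC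
    exact this
  obtain ⟨k, hk⟩ := heven2
  omega
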